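/- arXiv:2211.03774 — 2 statements merged into one kernel-verified Lean document; each statement's English description precedes it below -/
import Mathlib

section
/- Let B₃ be the braid group on three strands, presented with generators s, t and relation s·t·s = t·s·t, let 𝒯(a₁,…,aₙ) = s^{a₁}·t^{−a₂}·s^{a₃}·⋯ ∈ B₃, and let E = 𝒯(1,−1,1) = s·t·s. Then for every element B of B₃ there exist a unique integer n ≥ 1, a unique integer sequence (a₁,…,aₙ) satisfying aᵢ·aⱼ ≥ 0 for all i, j ∈ {1,…,n} and aᵢ ≠ 0 for all i > 1, and a unique integer k, such that B = 𝒯(a₁,…,aₙ)·Eᵏ. -/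
/-- The single braid relation `s·t·s = t·s·t` for the braid group on three strands,
written as a relator in the free group on two generators. -/
def braidRels : Set (FreeGroup (Fin 2)) :=
  { FreeGroup.of 0 * FreeGroup.of 1 * FreeGroup.of 0 *
    (FreeGroup.of 1 * FreeGroup.of 0 * FreeGroup.of 1)⁻¹ }

/-- The braid group on three strands, presented with generators `s`, `t`
and the single relation `s·t·s = t·s·t`. -/
abbrev B3 : Type := PresentedGroup braidRels

/-- The first generator `s` of `B₃`. -/
def s : B3 := PresentedGroup.of 0

/-- The second generator `t` of `B₃`. -/
def t : B3 := PresentedGroup.of 1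

/-- The half-twist `Δ = s·t·s` (the 3-braid `E = 𝒯(1,−1,1)`). -/
def Δ : B3 := s * t * s

/-- Auxiliary function building `𝒯(a₁,…,aₙ)`: when the flag is `true` the next
entry is a power of `s` (horizontal twists on the top two strands), when `false`
it is an inverse power of `t`. -/
def Tgo : Bool → List ℤ → B3
  | _, [] => 1
  | true, a :: l => s ^ a * Tgo false l
  | false, a :: l => t ^ (-a) * Tgo true l

/-- The 3-braid `𝒯(a₁,…,aₙ) = s^{a₁} · t^{−a₂} · s^{a₃} · t^{−a₄} · ⋯` in `B₃`. -/
def T (l : List ℤ) : B3 := Tgo true l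

/-- The special 3-braid `E = 𝒯(1,−1,1) = s·t·s`. -/
def E : B3 := T [1, -1, 1]



theorem braid : s * t * s = t * s * t := by
  have h : (PresentedGroup.mk braidRels)
      (FreeGroup.of 0 * FreeGroup.of 1 * FreeGroup.of 0 *
        (FreeGroup.of 1 * FreeGroup.of 0 * FreeGroup.of 1)⁻¹) = 1 := by
    apply (QuotientGroup.eq_one_iff _).2
    exact Subgroup.subset_normalClosure rfl
  simp only [map_mul, map_inv] at h
  have hs : (PresentedGroup.mk braidRels) (FreeGroup.of 0) = s := rfl
  have ht : (PresentedGroup.mk braidRels) (FreeGroup.of 1) = t := rfl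
  rw [hs, ht] at h
  exact (mul_inv_eq_one.1 h)

theorem E_eq : E = s * t * s := by
  simp [E, T, Tgo, zpow_one, mul_assoc]

theorem E_s : E * s = t * E := by
  rw [E_eq]
  calc s * t * s * s = t * s * t * s := by rw [braid]
  _ = t * (s * t * s) := by group

theorem E_t : E * t = s * E := by
  rw [E_eq]
  calc s * t * s * t = s * (t * s * t) := by group
  _ = s * (s * t * s) := by rw [braid]
  _ = s * (s * t * s) := rfl

theorem E_conj_s (a : ℤ) : E * s ^ a = t ^ a * E := by
  have h : E * s * E⁻¹ = t := by rw [E_s]; group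
  have := conj_zpow (i := a) (a := E) (b := s)
  rw [h] at this
  rw [this]; group

theorem E_conj_t (a : ℤ) : E * t ^ a = s ^ a * E := by
  have h : E * t * E⁻¹ = s := by rw [E_t]; group
  have := conj_zpow (i := a) (a := E) (b := t)
  rw [h] at this
  rw [this]; group

theorem E_flip (b : Bool) (l : List ℤ) :
    E * Tgo b l = Tgo (!b) (l.map (fun x => -x)) * E := by
  induction l generalizing b with
  | nil => simp [Tgo]
  | cons a r ih =>
    cases b with
    | true =>
      show E * (s ^ a * Tgo false r) = t ^ (- -a) * Tgo true (r.map _) * E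
      rw [neg_neg, ← mul_assoc, E_conj_s, mul_assoc, ih false, ← mul_assoc]
      simp
    | false =>
      show E * (t ^ (-a) * Tgo true r) = s ^ (-a) * Tgo false (r.map _) * E
      rw [← mul_assoc, E_conj_t, mul_assoc, ih true, ← mul_assoc]
      simp

theorem Einv_flip (b : Bool) (l : List ℤ) :
    E⁻¹ * Tgo b l = Tgo (!b) (l.map (fun x => -x)) * E⁻¹ := by
  have h := E_flip (!b) (l.map (fun x => -x))
  simp only [Bool.not_not, List.map_map] at h
  have h2 : (l.map (fun x : ℤ => - -x)) = l := by
    simp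
  rw [show ((fun x : ℤ => -x) ∘ fun x : ℤ => -x) = (fun x : ℤ => - -x) from rfl, h2] at h
  have h3 : Tgo b l = E * Tgo (!b) (l.map fun x => -x) * E⁻¹ :=
    eq_mul_inv_iff_mul_eq.2 h.symm
  rw [h3]; group

theorem Tgo_merge (b : Bool) (x y : ℤ) (r : List ℤ) :
    Tgo b (x :: 0 :: y :: r) = Tgo b ((x + y) :: r) := by
  cases b <;> simp [Tgo, zpow_add] <;> group

theorem Tgo_drop (b : Bool) (x : ℤ) : Tgo b [x, 0] = Tgo b [x] := by
  cases b <;> simp [Tgo]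

theorem Tgo_zero (b : Bool) : Tgo b [0] = 1 := by
  cases b <;> simp [Tgo]

theorem E_flip_t (r : List ℤ) : E * Tgo true r = Tgo false (r.map fun x => -x) * E := by
  simpa using E_flip true r

theorem E_flip_f (r : List ℤ) : E * Tgo false r = Tgo true (r.map fun x => -x) * E := by
  simpa using E_flip false r

theorem Einv_flip_t (r : List ℤ) : E⁻¹ * Tgo true r = Tgo false (r.map fun x => -x) * E⁻¹ := by
  simpa using Einv_flip true r

theorem Einv_conj_s (a : ℤ) : E⁻¹ * s ^ a = t ^ a * E⁻¹ := by
  have h := E_conj_t a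
  have : s ^ a = E * t ^ a * E⁻¹ := by rw [h]; group
  rw [this]; group

theorem st_eq : s * t = t⁻¹ * E := by
  rw [E_eq, braid]; group

theorem tinv_sinv : t⁻¹ * s⁻¹ = s * E⁻¹ := by
  rw [E_eq]; group

/-- The automorphism of `B3` sending `s ↦ s⁻¹`, `t ↦ t⁻¹`. -/
noncomputable def nu : B3 →* B3 :=
  PresentedGroup.toGroup (f := fun i : Fin 2 => (PresentedGroup.of i : B3)⁻¹)
    (by
      intro r hr
      cases hr
      simp only [map_mul, map_inv, FreeGroup.lift_apply_of]
      have h0 : (PresentedGroup.of (0 : Fin 2) : B3) = s := rfl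
      have h1 : (PresentedGroup.of (1 : Fin 2) : B3) = t := rfl
      rw [h0, h1, mul_inv_eq_one]
      have : (s * t * s)⁻¹ = (t * s * t)⁻¹ := by rw [braid]
      calc s⁻¹ * t⁻¹ * s⁻¹ = (s * t * s)⁻¹ := by group
        _ = (t * s * t)⁻¹ := this
        _ = t⁻¹ * s⁻¹ * t⁻¹ := by group)

theorem nu_s : nu s = s⁻¹ := PresentedGroup.toGroup.of _

theorem nu_t : nu t = t⁻¹ := PresentedGroup.toGroup.of _

theorem nu_Tgo (b : Bool) (l : List ℤ) :
    nu (Tgo b l) = Tgo b (l.map fun x => -x) := by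
  induction l generalizing b with
  | nil => simp [Tgo]
  | cons a r ih =>
    cases b with
    | true =>
      show nu (s ^ a * Tgo false r) = s ^ (-a) * Tgo false (r.map _)
      rw [map_mul, map_zpow, nu_s, ih false, inv_zpow, ← zpow_neg]
    | false =>
      show nu (t ^ (-a) * Tgo true r) = t ^ (- -a) * Tgo true (r.map _)
      rw [map_mul, map_zpow, nu_t, ih true, inv_zpow, ← zpow_neg]

theorem nu_T (l : List ℤ) : nu (T l) = T (l.map fun x => -x) := nu_Tgo true l

theorem nu_E : nu E = E⁻¹ := by
  rw [E_eq, map_mul, map_mul, nu_s, nu_t]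
  group

/-- Standardness of the sequence of an alternating diagram. -/
def Std (l : List ℤ) : Prop :=
  l ≠ [] ∧ (∀ a ∈ l, ∀ b ∈ l, 0 ≤ a * b) ∧ (∀ a ∈ l.tail, a ≠ 0)

theorem sign_dichotomy {l : List ℤ} (h : ∀ a ∈ l, ∀ b ∈ l, 0 ≤ a * b) :
    (∀ a ∈ l, 0 ≤ a) ∨ (∀ a ∈ l, a ≤ 0) := by
  by_contra hc
  push_neg at hc
  obtain ⟨⟨a, ha, ha'⟩, ⟨b, hb, hb'⟩⟩ := hc
  have := h a ha b hb
  nlinarith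

theorem std_of_nonneg {l : List ℤ} (h1 : l ≠ []) (h2 : ∀ a ∈ l, 0 ≤ a)
    (h3 : ∀ a ∈ l.tail, a ≠ 0) : Std l :=
  ⟨h1, fun a ha b hb => mul_nonneg (h2 a ha) (h2 b hb), h3⟩

theorem std_of_nonpos {l : List ℤ} (h1 : l ≠ []) (h2 : ∀ a ∈ l, a ≤ 0)
    (h3 : ∀ a ∈ l.tail, a ≠ 0) : Std l :=
  ⟨h1, fun a ha b hb => by nlinarith [h2 a ha, h2 b hb], h3⟩

theorem std_neg {l : List ℤ} (h : Std l) : Std (l.map fun x => -x) := by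
  obtain ⟨h1, h2, h3⟩ := h
  refine ⟨by simpa using h1, ?_, ?_⟩
  · intro a ha b hb
    simp only [List.mem_map] at ha hb
    obtain ⟨a', ha', rfl⟩ := ha
    obtain ⟨b', hb', rfl⟩ := hb
    simpa using h2 a' ha' b' hb'
  · intro a ha
    rw [← List.map_tail] at ha
    simp only [List.mem_map] at ha
    obtain ⟨a', ha', rfl⟩ := ha
    simpa using h3 a' ha'

theorem Einv_flip_f (r : List ℤ) : E⁻¹ * Tgo false r = Tgo true (r.map fun x => -x) * E⁻¹ := by
  simpa using Einv_flip false r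

theorem T_zero_cons (m : List ℤ) : T (0 :: m) = Tgo false m := by
  show s ^ (0 : ℤ) * _ = _
  simp

theorem tinv_Tgo_false (b : ℤ) (r : List ℤ) :
    t⁻¹ * Tgo false (b :: r) = Tgo false ((b + 1) :: r) := by
  show t⁻¹ * (t ^ (-b) * Tgo true r) = t ^ (-(b + 1)) * Tgo true r
  group

theorem key_st (c : ℤ) (r : List ℤ) :
    s * Tgo false (c :: r) = Tgo false (1 :: -(c + 1) :: (r.map fun x => -x)) * E := by
  show s * (t ^ (-c) * Tgo true r)
      = t ^ (-(1 : ℤ)) * (s ^ (-(c + 1)) * Tgo false (r.map fun x => -x)) * E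
  calc s * (t ^ (-c) * Tgo true r)
      = (s * t) * (t ^ (-(c + 1)) * Tgo true r) := by group
    _ = (t⁻¹ * E) * (t ^ (-(c + 1)) * Tgo true r) := by rw [st_eq]
    _ = t⁻¹ * (E * t ^ (-(c + 1))) * Tgo true r := by group
    _ = t⁻¹ * (s ^ (-(c + 1)) * E) * Tgo true r := by rw [E_conj_t]
    _ = t⁻¹ * s ^ (-(c + 1)) * (E * Tgo true r) := by group
    _ = t⁻¹ * s ^ (-(c + 1)) * (Tgo false (r.map fun x => -x) * E) := by rw [E_flip_t]
    _ = t ^ (-(1 : ℤ)) * (s ^ (-(c + 1)) * Tgo false (r.map fun x => -x)) * E := by group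

theorem key_ts (a : ℤ) (r : List ℤ) :
    t⁻¹ * T (a :: r) = T (1 :: -(a + 1) :: (r.map fun x => -x)) * E⁻¹ := by
  show t⁻¹ * (s ^ a * Tgo false r)
      = s ^ (1 : ℤ) * (t ^ (- -(a + 1)) * Tgo true (r.map fun x => -x)) * E⁻¹
  calc t⁻¹ * (s ^ a * Tgo false r)
      = (t⁻¹ * s⁻¹) * (s ^ (a + 1) * Tgo false r) := by group
    _ = (s * E⁻¹) * (s ^ (a + 1) * Tgo false r) := by rw [tinv_sinv]
    _ = s * (E⁻¹ * s ^ (a + 1)) * Tgo false r := by group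
    _ = s * (t ^ (a + 1) * E⁻¹) * Tgo false r := by rw [Einv_conj_s]
    _ = s * t ^ (a + 1) * (E⁻¹ * Tgo false r) := by group
    _ = s * t ^ (a + 1) * (Tgo true (r.map fun x => -x) * E⁻¹) := by rw [Einv_flip_f]
    _ = s ^ (1 : ℤ) * (t ^ (- -(a + 1)) * Tgo true (r.map fun x => -x)) * E⁻¹ := by group

theorem stepS {l : List ℤ} (h : Std l) : ∃ (l' : List ℤ) (k : ℤ), Std l' ∧ s * T l = T l' * E ^ k := by
  obtain ⟨hne, hsg, htl⟩ := h
  obtain ⟨a, r, rfl⟩ : ∃ a r, l = a :: r := by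
    cases l with
    | nil => exact absurd rfl hne
    | cons a r => exact ⟨a, r, rfl⟩
  have hid : ∀ x : ℤ, s * T (x :: r) = T ((x + 1) :: r) * E ^ (0 : ℤ) := by
    intro x
    show s * (s ^ x * Tgo false r) = s ^ (x + 1) * Tgo false r * E ^ (0 : ℤ)
    group
  rcases sign_dichotomy hsg with hng | hnp
  · refine ⟨(a + 1) :: r, 0, ?_, hid a⟩
    refine std_of_nonneg (by simp) ?_ htl
    intro x hx
    rcases List.mem_cons.1 hx with rfl | hx
    · have := hng a (by simp); omega
    · exact hng x (List.mem_cons_of_mem _ hx)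
  · have ha0 : a ≤ 0 := hnp a (by simp)
    rcases eq_or_lt_of_le ha0 with ha | ha
    · -- a = 0
      subst ha
      cases r with
      | nil =>
        refine ⟨[1], 0, ⟨by simp, by norm_num, by simp⟩, ?_⟩
        show s * (s ^ (0 : ℤ) * 1) = s ^ (1 : ℤ) * 1 * E ^ (0 : ℤ)
        group
      | cons b r₂ =>
        have hb0 : b ≤ 0 := hnp b (by simp)
        have hbne : b ≠ 0 := htl b (by simp)
        have hkey : s * T (0 :: b :: r₂)
            = T (0 :: 1 :: -(b + 1) :: (r₂.map fun x => -x)) * E ^ (1 : ℤ) := by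
          rw [T_zero_cons, key_st, T_zero_cons, zpow_one]
        have hr₂0 : ∀ x ∈ r₂, x ≤ 0 := fun x hx => hnp x (by simp [hx])
        have hr₂ne : ∀ x ∈ r₂, x ≠ 0 := fun x hx => htl x (by simp [hx])
        rcases eq_or_lt_of_le (show b ≤ -1 by omega) with hb1 | hb1
        · -- b = -1
          subst hb1
          cases r₂ with
          | nil =>
            refine ⟨[0, 1], 1, ⟨by simp, by norm_num, by norm_num⟩, ?_⟩
            rw [hkey]
            have h2 : ((0:ℤ) :: 1 :: -(-1 + 1) :: List.map (fun x : ℤ => -x) []) = [0, 1, 0] := by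
              norm_num
            rw [h2]
            have h3 : T [0, 1, 0] = T [0, 1] := by
              rw [show ([0, 1, 0] : List ℤ) = 0 :: [1, 0] from rfl, T_zero_cons, T_zero_cons]
              exact Tgo_drop false 1
            rw [h3]
          | cons c r₃ =>
            have hc0 : c ≤ 0 := hr₂0 c (by simp)
            have hcne : c ≠ 0 := hr₂ne c (by simp)
            refine ⟨0 :: (1 - c) :: (r₃.map fun x => -x), 1, ?_, ?_⟩
            · refine std_of_nonneg (by simp) ?_ ?_
              · intro x hx
                rcases List.mem_cons.1 hx with rfl | hx
                · omega
                rcases List.mem_cons.1 hx with rfl | hx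
                · omega
                · simp only [List.mem_map] at hx
                  obtain ⟨y, hy, rfl⟩ := hx
                  have := hr₂0 y (by simp [hy]); omega
              · intro x hx
                simp only [List.tail_cons, List.mem_cons] at hx
                rcases hx with rfl | hx
                · have : c ≤ -1 := by omega
                  omega
                · simp only [List.mem_map] at hx
                  obtain ⟨y, hy, rfl⟩ := hx
                  have := hr₂ne y (by simp [hy])
                  simpa using this
            · rw [hkey]
              have h2 : ((0:ℤ) :: 1 :: -(-1 + 1) :: List.map (fun x : ℤ => -x) (c :: r₃))
                  = 0 :: 1 :: 0 :: (-c) :: (r₃.map fun x => -x) := by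
                norm_num
              rw [h2]
              have h3 : T (0 :: 1 :: 0 :: (-c) :: (r₃.map fun x => -x))
                  = T (0 :: (1 - c) :: (r₃.map fun x => -x)) := by
                rw [T_zero_cons, T_zero_cons, Tgo_merge, show (1 + -c : ℤ) = 1 - c by ring]
              rw [h3]
        · -- b ≤ -2
          refine ⟨0 :: 1 :: -(b + 1) :: (r₂.map fun x => -x), 1, ?_, hkey⟩
          refine std_of_nonneg (by simp) ?_ ?_
          · intro x hx
            rcases List.mem_cons.1 hx with rfl | hx
            · omega
            rcases List.mem_cons.1 hx with rfl | hx
            · omega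
            rcases List.mem_cons.1 hx with rfl | hx
            · omega
            · simp only [List.mem_map] at hx
              obtain ⟨y, hy, rfl⟩ := hx
              have := hr₂0 y hy; omega
          · intro x hx
            simp only [List.tail_cons, List.mem_cons] at hx
            rcases hx with rfl | hx
            · omega
            rcases hx with rfl | hx
            · omega
            · simp only [List.mem_map] at hx
              obtain ⟨y, hy, rfl⟩ := hx
              have := hr₂ne y hy
              simpa using this
    · -- a < 0
      refine ⟨(a + 1) :: r, 0, ?_, hid a⟩
      refine std_of_nonpos (by simp) ?_ htl
      intro x hx
      rcases List.mem_cons.1 hx with rfl | hx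
      · omega
      · exact hnp x (List.mem_cons_of_mem _ hx)

theorem Tgo_false_zero (m : List ℤ) : Tgo false (0 :: m) = Tgo true m := by
  show t ^ (-(0 : ℤ)) * Tgo true m = Tgo true m
  norm_num

theorem stepTinv {l : List ℤ} (h : Std l) :
    ∃ (l' : List ℤ) (k : ℤ), Std l' ∧ t⁻¹ * T l = T l' * E ^ k := by
  obtain ⟨hne, hsg, htl⟩ := h
  obtain ⟨a, r, rfl⟩ : ∃ a r, l = a :: r := by
    cases l with
    | nil => exact absurd rfl hne
    | cons a r => exact ⟨a, r, rfl⟩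
  have hid : ∀ m : List ℤ, t⁻¹ * T m = T (0 :: 1 :: m) * E ^ (0 : ℤ) := by
    intro m
    show t⁻¹ * Tgo true m = s ^ (0 : ℤ) * (t ^ (-(1 : ℤ)) * Tgo true m) * E ^ (0 : ℤ)
    group
  have hid2 : ∀ (b : ℤ) (r₂ : List ℤ),
      t⁻¹ * T (0 :: b :: r₂) = T (0 :: (b + 1) :: r₂) * E ^ (0 : ℤ) := by
    intro b r₂
    rw [T_zero_cons, T_zero_cons, tinv_Tgo_false]
    group
  rcases sign_dichotomy hsg with hng | hnp
  · -- nonnegative case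
    have ha0 : 0 ≤ a := hng a (by simp)
    rcases eq_or_lt_of_le ha0 with ha | ha
    · -- a = 0
      cases r with
      | nil =>
        exact ⟨[0, 1], 0, ⟨by simp, by norm_num, by norm_num⟩, ha ▸ hid [0]⟩
      | cons b r₂ =>
        have hb1 : 1 ≤ b := by
          have := hng b (by simp)
          have := htl b (by simp)
          omega
        refine ⟨0 :: (b + 1) :: r₂, 0, ?_, ?_⟩
        · refine std_of_nonneg (by simp) ?_ ?_
          · intro x hx
            rcases List.mem_cons.1 hx with rfl | hx
            · omega
            rcases List.mem_cons.1 hx with rfl | hx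
            · omega
            · exact hng x (by simp [hx])
          · intro x hx
            simp only [List.tail_cons, List.mem_cons] at hx
            rcases hx with rfl | hx
            · omega
            · exact htl x (by simp [hx])
        · rw [← ha]; exact hid2 b r₂
    · -- 1 ≤ a
      refine ⟨0 :: 1 :: a :: r, 0, ?_, hid (a :: r)⟩
      refine std_of_nonneg (by simp) ?_ ?_
      · intro x hx
        rcases List.mem_cons.1 hx with rfl | hx
        · omega
        rcases List.mem_cons.1 hx with rfl | hx
        · omega
        · exact hng x hx
      · intro x hx
        simp only [List.tail_cons, List.mem_cons] at hx
        rcases hx with rfl | hx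
        · omega
        rcases hx with rfl | hx
        · omega
        · exact htl x (by simp [hx])
  · -- nonpositive case
    have ha0 : a ≤ 0 := hnp a (by simp)
    rcases eq_or_lt_of_le ha0 with ha | ha
    · -- a = 0
      subst ha
      cases r with
      | nil =>
        exact ⟨[0, 1], 0, ⟨by simp, by norm_num, by norm_num⟩, hid [0]⟩
      | cons b r₂ =>
        have hb0 : b ≤ 0 := hnp b (by simp)
        have hbne : b ≠ 0 := htl b (by simp)
        have hr₂0 : ∀ x ∈ r₂, x ≤ 0 := fun x hx => hnp x (by simp [hx])
        have hr₂ne : ∀ x ∈ r₂, x ≠ 0 := fun x hx => htl x (by simp [hx])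
        rcases eq_or_lt_of_le (show b ≤ -1 by omega) with hb1 | hb1
        · -- b = -1
          subst hb1
          cases r₂ with
          | nil =>
            refine ⟨[0], 0, ⟨by simp, by norm_num, by norm_num⟩, ?_⟩
            have h2 := hid2 (-1) ([] : List ℤ)
            norm_num at h2 ⊢
            rw [h2]
            have h3 : T [0, 0] = T [0] := by
              rw [T_zero_cons, Tgo_false_zero]
              rfl
            rw [h3]
          | cons c r₃ =>
            refine ⟨c :: r₃, 0, ?_, ?_⟩
            · refine std_of_nonpos (by simp) ?_ ?_
              · intro x hx
                exact hr₂0 x hx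
              · intro x hx
                exact hr₂ne x (by simp [List.mem_of_mem_tail hx])
            · have h2 := hid2 (-1) (c :: r₃)
              norm_num at h2 ⊢
              rw [h2]
              have h3 : T (0 :: 0 :: c :: r₃) = T (c :: r₃) := by
                rw [T_zero_cons, Tgo_false_zero]
                rfl
              rw [h3]
        · -- b ≤ -2
          refine ⟨0 :: (b + 1) :: r₂, 0, ?_, hid2 b r₂⟩
          refine std_of_nonpos (by simp) ?_ ?_
          · intro x hx
            rcases List.mem_cons.1 hx with rfl | hx
            · omega
            rcases List.mem_cons.1 hx with rfl | hx
            · omega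
            · exact hr₂0 x hx
          · intro x hx
            simp only [List.tail_cons, List.mem_cons] at hx
            rcases hx with rfl | hx
            · omega
            · exact hr₂ne x hx
    · -- a ≤ -1
      have hkey := key_ts a r
      have hr0 : ∀ x ∈ r, x ≤ 0 := fun x hx => hnp x (by simp [hx])
      have hrne : ∀ x ∈ r, x ≠ 0 := fun x hx => htl x (by simp [hx])
      rcases eq_or_lt_of_le (show a ≤ -1 by omega) with ha1 | ha1
      · -- a = -1
        subst ha1
        cases r with
        | nil =>
          refine ⟨[1], -1, ⟨by simp, by norm_num, by norm_num⟩, ?_⟩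
          rw [hkey]
          have h2 : ((1:ℤ) :: -(-1 + 1) :: List.map (fun x : ℤ => -x) []) = [1, 0] := by
            norm_num
          rw [h2]
          have h3 : T [1, 0] = T [1] := Tgo_drop true 1
          rw [h3, zpow_neg_one]
        | cons c r₃ =>
          have hc : c ≤ -1 := by
            have := hr0 c (by simp)
            have := hrne c (by simp)
            omega
          refine ⟨(1 - c) :: (r₃.map fun x => -x), -1, ?_, ?_⟩
          · refine std_of_nonneg (by simp) ?_ ?_
            · intro x hx
              rcases List.mem_cons.1 hx with rfl | hx
              · omega
              · simp only [List.mem_map] at hx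
                obtain ⟨y, hy, rfl⟩ := hx
                have := hr0 y (by simp [hy]); omega
            · intro x hx
              simp only [List.tail_cons, List.mem_map] at hx
              obtain ⟨y, hy, rfl⟩ := hx
              have := hrne y (by simp [hy])
              simpa using this
          · rw [hkey]
            have h2 : ((1:ℤ) :: -(-1 + 1) :: List.map (fun x : ℤ => -x) (c :: r₃))
                = 1 :: 0 :: (-c) :: (r₃.map fun x => -x) := by
              norm_num
            rw [h2]
            have h3 : T (1 :: 0 :: (-c) :: (r₃.map fun x => -x))
                = T ((1 - c) :: (r₃.map fun x => -x)) := by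
              rw [show T (1 :: 0 :: (-c) :: (r₃.map fun x => -x))
                  = Tgo true (1 :: 0 :: (-c) :: (r₃.map fun x => -x)) from rfl, Tgo_merge,
                show (1 + -c : ℤ) = 1 - c by ring]
              rfl
            rw [h3, zpow_neg_one]
      · -- a ≤ -2
        refine ⟨1 :: -(a + 1) :: (r.map fun x => -x), -1, ?_, ?_⟩
        · refine std_of_nonneg (by simp) ?_ ?_
          · intro x hx
            rcases List.mem_cons.1 hx with rfl | hx
            · omega
            rcases List.mem_cons.1 hx with rfl | hx
            · omega
            · simp only [List.mem_map] at hx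
              obtain ⟨y, hy, rfl⟩ := hx
              have := hr0 y hy; omega
          · intro x hx
            simp only [List.tail_cons, List.mem_cons] at hx
            rcases hx with rfl | hx
            · omega
            · simp only [List.mem_map] at hx
              obtain ⟨y, hy, rfl⟩ := hx
              have := hrne y hy
              simpa using this
        · rw [hkey, zpow_neg_one]

theorem stepSinv {l : List ℤ} (h : Std l) :
    ∃ (l' : List ℤ) (k : ℤ), Std l' ∧ s⁻¹ * T l = T l' * E ^ k := by
  obtain ⟨l', k, h1, h2⟩ := stepS (std_neg h)
  refine ⟨l'.map (fun x => -x), -k, std_neg h1, ?_⟩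
  have h3 := congrArg nu h2
  simp only [map_mul, map_zpow, nu_s, nu_T, nu_E] at h3
  have hll : (l.map fun x : ℤ => -x).map (fun x : ℤ => -x) = l := by
    simp [List.map_map, Function.comp]
  rw [hll] at h3
  rw [h3, inv_zpow, ← zpow_neg]

theorem stepT {l : List ℤ} (h : Std l) :
    ∃ (l' : List ℤ) (k : ℤ), Std l' ∧ t * T l = T l' * E ^ k := by
  obtain ⟨l', k, h1, h2⟩ := stepTinv (std_neg h)
  refine ⟨l'.map (fun x => -x), -k, std_neg h1, ?_⟩
  have h3 := congrArg nu h2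
  simp only [map_mul, map_zpow, map_inv, nu_t, nu_T, nu_E, inv_inv] at h3
  have hll : (l.map fun x : ℤ => -x).map (fun x : ℤ => -x) = l := by
    simp [List.map_map, Function.comp]
  rw [hll] at h3
  rw [h3, inv_zpow, ← zpow_neg]

theorem exists_std (B : B3) : ∃ (l : List ℤ) (k : ℤ), Std l ∧ B = T l * E ^ k := by
  have hB : B ∈ Subgroup.closure (Set.range (PresentedGroup.of : Fin 2 → B3)) := by
    rw [PresentedGroup.closure_range_of]
    trivial
  refine Subgroup.closure_induction_left
    (p := fun x _ => ∃ (l : List ℤ) (k : ℤ), Std l ∧ x = T l * E ^ k) ?_ ?_ ?_ hB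
  · exact ⟨[0], 0, ⟨by simp, by norm_num, by norm_num⟩, by rw [show T [0] = 1 from Tgo_zero true]; simp⟩
  · rintro x ⟨i, rfl⟩ y hy ⟨l, k, hstd, rfl⟩
    fin_cases i
    · obtain ⟨l', k', h1, h2⟩ := stepS hstd
      refine ⟨l', k' + k, h1, ?_⟩
      show s * (T l * E ^ k) = T l' * E ^ (k' + k)
      rw [← mul_assoc, h2, mul_assoc, ← zpow_add]
    · obtain ⟨l', k', h1, h2⟩ := stepT hstd
      refine ⟨l', k' + k, h1, ?_⟩
      show t * (T l * E ^ k) = T l' * E ^ (k' + k)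
      rw [← mul_assoc, h2, mul_assoc, ← zpow_add]
  · rintro x ⟨i, rfl⟩ y hy ⟨l, k, hstd, rfl⟩
    fin_cases i
    · obtain ⟨l', k', h1, h2⟩ := stepSinv hstd
      refine ⟨l', k' + k, h1, ?_⟩
      show s⁻¹ * (T l * E ^ k) = T l' * E ^ (k' + k)
      rw [← mul_assoc, h2, mul_assoc, ← zpow_add]
    · obtain ⟨l', k', h1, h2⟩ := stepTinv hstd
      refine ⟨l', k' + k, h1, ?_⟩
      show t⁻¹ * (T l * E ^ k) = T l' * E ^ (k' + k)
      rw [← mul_assoc, h2, mul_assoc, ← zpow_add]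

abbrev Mat := Matrix (Fin 2) (Fin 2) ℤ
abbrev SL2 := Matrix.SpecialLinearGroup (Fin 2) ℤ

def Um (a : ℤ) : Mat := !![1, a; 0, 1]
def Lm (a : ℤ) : Mat := !![1, 0; a, 1]

def SmS : SL2 := ⟨Um 1, by simp [Um, Matrix.det_fin_two_of]⟩
def TmS : SL2 := ⟨Lm (-1), by simp [Lm, Matrix.det_fin_two_of]⟩

theorem braid_mat : SmS * TmS * SmS = TmS * SmS * TmS := by
  apply Matrix.SpecialLinearGroup.ext
  intro i j
  simp only [Matrix.SpecialLinearGroup.coe_mul]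
  fin_cases i <;> fin_cases j <;>
    simp [SmS, TmS, Um, Lm, Matrix.SpecialLinearGroup.coe_mul, Matrix.mul_apply,
      Fin.sum_univ_two]

noncomputable def ρ : B3 →* SL2 :=
  PresentedGroup.toGroup (f := fun i : Fin 2 => if i = 0 then SmS else TmS)
    (by
      intro r hr
      cases hr
      simp only [map_mul, map_inv, FreeGroup.lift_apply_of]
      norm_num
      rw [braid_mat]
      group)

theorem ρ_s : ρ s = SmS := PresentedGroup.toGroup.of _

theorem ρ_t : ρ t = TmS := by
  have h : ρ t = if (1 : Fin 2) = 0 then SmS else TmS := PresentedGroup.toGroup.of _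
  simpa using h

theorem Um_mul (a : ℤ) (N : Mat) :
    Um a * N = !![N 0 0 + a * N 1 0, N 0 1 + a * N 1 1; N 1 0, N 1 1] := by
  ext i j
  fin_cases i <;> fin_cases j <;> simp [Um, Matrix.mul_apply, Fin.sum_univ_two]

theorem Lm_mul (a : ℤ) (N : Mat) :
    Lm a * N = !![N 0 0, N 0 1; a * N 0 0 + N 1 0, a * N 0 1 + N 1 1] := by
  ext i j
  fin_cases i <;> fin_cases j <;> simp [Lm, Matrix.mul_apply, Fin.sum_univ_two]

theorem coe_SmS_zpow (a : ℤ) : ((SmS ^ a : SL2) : Mat) = Um a := by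
  induction a using Int.induction_on with
  | zero => simp [Um, Matrix.SpecialLinearGroup.coe_one, Matrix.one_fin_two]
  | succ n ih =>
    rw [zpow_add_one, Matrix.SpecialLinearGroup.coe_mul, ih]
    show Um n * (SmS : Mat) = _
    rw [show (SmS : Mat) = Um 1 from rfl]
    ext i j
    fin_cases i <;> fin_cases j <;> simp [Um, Matrix.mul_apply, Fin.sum_univ_two] <;> push_cast <;> ring
  | pred n ih =>
    rw [zpow_sub_one, Matrix.SpecialLinearGroup.coe_mul, ih]
    have hinv : ((SmS⁻¹ : SL2) : Mat) = Um (-1) := by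
      rw [Matrix.SpecialLinearGroup.coe_inv]
      show Matrix.adjugate (Um 1) = _
      rw [show Um 1 = !![1,1;0,1] from rfl, Matrix.adjugate_fin_two]
      rfl
    rw [hinv]
    ext i j
    fin_cases i <;> fin_cases j <;> simp [Um, Matrix.mul_apply, Fin.sum_univ_two] <;> push_cast <;> ring

theorem coe_TmS_zpow (a : ℤ) : ((TmS ^ a : SL2) : Mat) = Lm (-a) := by
  induction a using Int.induction_on with
  | zero => simp [Lm, Matrix.SpecialLinearGroup.coe_one, Matrix.one_fin_two]
  | succ n ih =>
    rw [zpow_add_one, Matrix.SpecialLinearGroup.coe_mul, ih]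
    show Lm (-n) * (TmS : Mat) = _
    rw [show (TmS : Mat) = Lm (-1) from rfl]
    ext i j
    fin_cases i <;> fin_cases j <;> simp [Lm, Matrix.mul_apply, Fin.sum_univ_two] <;> push_cast <;> ring
  | pred n ih =>
    rw [zpow_sub_one, Matrix.SpecialLinearGroup.coe_mul, ih]
    have hinv : ((TmS⁻¹ : SL2) : Mat) = Lm 1 := by
      rw [Matrix.SpecialLinearGroup.coe_inv]
      show Matrix.adjugate (Lm (-1)) = _
      rw [show Lm (-1) = !![1,0;-1,1] from rfl, Matrix.adjugate_fin_two]
      show !![1, 0; 1, 1] = Lm 1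
      rfl
    rw [hinv]
    ext i j
    fin_cases i <;> fin_cases j <;> simp [Lm, Matrix.mul_apply, Fin.sum_univ_two] <;> push_cast <;> ring

theorem coe_rho_true (a : ℤ) (r : List ℤ) :
    ((ρ (Tgo true (a :: r)) : SL2) : Mat) = Um a * ((ρ (Tgo false r) : SL2) : Mat) := by
  show ((ρ (s ^ a * Tgo false r) : SL2) : Mat) = _
  rw [map_mul, map_zpow, ρ_s, Matrix.SpecialLinearGroup.coe_mul, coe_SmS_zpow]

theorem coe_rho_false (a : ℤ) (r : List ℤ) :
    ((ρ (Tgo false (a :: r)) : SL2) : Mat) = Lm a * ((ρ (Tgo true r) : SL2) : Mat) := by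
  show ((ρ (t ^ (-a) * Tgo true r) : SL2) : Mat) = _
  rw [map_mul, map_zpow, ρ_t, Matrix.SpecialLinearGroup.coe_mul, coe_TmS_zpow, neg_neg]

theorem rho_nil (b : Bool) : ρ (Tgo b []) = 1 := by
  cases b <;> exact map_one ρ

theorem ent00 (w x y z : ℤ) : (!![w,x;y,z] : Mat) 0 0 = w := by simp
theorem ent01 (w x y z : ℤ) : (!![w,x;y,z] : Mat) 0 1 = x := by simp
theorem ent10 (w x y z : ℤ) : (!![w,x;y,z] : Mat) 1 0 = y := by simp
theorem ent11 (w x y z : ℤ) : (!![w,x;y,z] : Mat) 1 1 = z := by simp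

def Pos (l : List ℤ) : Prop := ∀ x ∈ l, 1 ≤ x

def Pt (m : Mat) : Prop := m 1 0 < m 0 0 ∧ 0 ≤ m 1 0 ∧ m 1 1 ≤ m 0 1 ∧ 1 ≤ m 1 1
def Pf (m : Mat) : Prop := m 0 0 ≤ m 1 0 ∧ 1 ≤ m 0 0 ∧ m 0 1 < m 1 1 ∧ 0 ≤ m 0 1

theorem inv_lemma (l : List ℤ) (hp : Pos l) (hne : l ≠ []) :
    Pt ((ρ (Tgo true l) : SL2) : Mat) ∧ Pf ((ρ (Tgo false l) : SL2) : Mat) := by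
  induction l with
  | nil => exact absurd rfl hne
  | cons a r ih =>
    have ha : 1 ≤ a := hp a (by simp)
    cases r with
    | nil =>
      constructor
      · rw [coe_rho_true, rho_nil, Matrix.SpecialLinearGroup.coe_one, Matrix.mul_one]
        exact ⟨by simp [Um], by simp [Um], by simp [Um]; omega, by simp [Um]⟩
      · rw [coe_rho_false, rho_nil, Matrix.SpecialLinearGroup.coe_one, Matrix.mul_one]
        exact ⟨by simp [Lm]; omega, by simp [Lm], by simp [Lm], by simp [Lm]⟩
    | cons c r₂ =>
      obtain ⟨hPt, hPf⟩ := ih (fun x hx => hp x (by simp [hx])) (by simp)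
      constructor
      · rw [coe_rho_true, Um_mul]
        set N := ((ρ (Tgo false (c :: r₂)) : SL2) : Mat) with hN
        obtain ⟨p1, p2, p3, p4⟩ := hPf
        refine ⟨?_, ?_, ?_, ?_⟩
        · rw [ent10, ent00]; nlinarith [mul_nonneg (by omega : (0:ℤ) ≤ a - 1) (by omega : (0:ℤ) ≤ N 1 0)]
        · rw [ent10]; omega
        · rw [ent11, ent01]; nlinarith [mul_nonneg (by omega : (0:ℤ) ≤ a - 1) (by omega : (0:ℤ) ≤ N 1 1)]
        · rw [ent11]; omega
      · rw [coe_rho_false, Lm_mul]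
        set N := ((ρ (Tgo true (c :: r₂)) : SL2) : Mat) with hN
        obtain ⟨p1, p2, p3, p4⟩ := hPt
        refine ⟨?_, ?_, ?_, ?_⟩
        · rw [ent10, ent00]; nlinarith [mul_nonneg (by omega : (0:ℤ) ≤ a - 1) (by omega : (0:ℤ) ≤ N 0 0)]
        · rw [ent00]; omega
        · rw [ent01, ent11]; nlinarith [mul_nonneg (by omega : (0:ℤ) ≤ a - 1) (by omega : (0:ℤ) ≤ N 0 1)]
        · rw [ent01]; omega

theorem euclid {a c p q δ : ℤ} (hδ : 1 ≤ δ) (hp0 : 0 ≤ p) (hpδ : p < δ) (hq0 : 0 ≤ q)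
    (hqδ : q < δ) (h : a * δ + p = c * δ + q) : a = c := by
  rcases lt_trichotomy a c with h1 | h1 | h1
  · exfalso
    nlinarith [mul_le_mul_of_nonneg_right (by omega : a + 1 ≤ c) (by omega : (0:ℤ) ≤ δ)]
  · exact h1
  · exfalso
    nlinarith [mul_le_mul_of_nonneg_right (by omega : c + 1 ≤ a) (by omega : (0:ℤ) ≤ δ)]

theorem mat_ext {N₁ N₂ : Mat} (h00 : N₁ 0 0 = N₂ 0 0) (h01 : N₁ 0 1 = N₂ 0 1)
    (h10 : N₁ 1 0 = N₂ 1 0) (h11 : N₁ 1 1 = N₂ 1 1) : N₁ = N₂ := by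
  ext i j
  fin_cases i <;> fin_cases j <;> assumption

theorem stepUmat {a₁ a₂ : ℤ} {N₁ N₂ : Mat} (hN₁ : N₁ = 1 ∨ Pf N₁) (hN₂ : N₂ = 1 ∨ Pf N₂)
    (h : Um a₁ * N₁ = Um a₂ * N₂) : a₁ = a₂ ∧ N₁ = N₂ := by
  rw [Um_mul, Um_mul] at h
  have e00 : N₁ 0 0 + a₁ * N₁ 1 0 = N₂ 0 0 + a₂ * N₂ 1 0 := by
    have := congrFun (congrFun h 0) 0
    rwa [ent00, ent00] at this
  have e01 : N₁ 0 1 + a₁ * N₁ 1 1 = N₂ 0 1 + a₂ * N₂ 1 1 := by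
    have := congrFun (congrFun h 0) 1
    rwa [ent01, ent01] at this
  have e10 : N₁ 1 0 = N₂ 1 0 := by
    have := congrFun (congrFun h 1) 0
    rwa [ent10, ent10] at this
  have e11 : N₁ 1 1 = N₂ 1 1 := by
    have := congrFun (congrFun h 1) 1
    rwa [ent11, ent11] at this
  rcases hN₁ with rfl | hP₁ <;> rcases hN₂ with rfl | hP₂
  · refine ⟨?_, rfl⟩
    simp [Matrix.one_apply] at e01
    omega
  · exfalso
    obtain ⟨q1, q2, q3, q4⟩ := hP₂
    simp [Matrix.one_apply] at e10
    omega
  · exfalso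
    obtain ⟨q1, q2, q3, q4⟩ := hP₁
    simp [Matrix.one_apply] at e10
    omega
  · obtain ⟨p1, p2, p3, p4⟩ := hP₁
    obtain ⟨q1, q2, q3, q4⟩ := hP₂
    have ha : a₁ = a₂ := by
      apply euclid (δ := N₁ 1 1) (p := N₁ 0 1) (q := N₂ 0 1) (by omega) (by omega) (by omega)
        (by omega) (by omega)
      rw [e11] at e01 ⊢
      omega
    subst ha
    refine ⟨rfl, mat_ext ?_ ?_ e10 e11⟩
    · rw [e10] at e00; omega
    · rw [e11] at e01; omega

theorem stepLmat {a₁ a₂ : ℤ} {N₁ N₂ : Mat} (hN₁ : N₁ = 1 ∨ Pt N₁) (hN₂ : N₂ = 1 ∨ Pt N₂)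
    (h : Lm a₁ * N₁ = Lm a₂ * N₂) : a₁ = a₂ ∧ N₁ = N₂ := by
  rw [Lm_mul, Lm_mul] at h
  have e10 : a₁ * N₁ 0 0 + N₁ 1 0 = a₂ * N₂ 0 0 + N₂ 1 0 := by
    have := congrFun (congrFun h 1) 0
    rwa [ent10, ent10] at this
  have e11 : a₁ * N₁ 0 1 + N₁ 1 1 = a₂ * N₂ 0 1 + N₂ 1 1 := by
    have := congrFun (congrFun h 1) 1
    rwa [ent11, ent11] at this
  have e00 : N₁ 0 0 = N₂ 0 0 := by
    have := congrFun (congrFun h 0) 0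
    rwa [ent00, ent00] at this
  have e01 : N₁ 0 1 = N₂ 0 1 := by
    have := congrFun (congrFun h 0) 1
    rwa [ent01, ent01] at this
  rcases hN₁ with rfl | hP₁ <;> rcases hN₂ with rfl | hP₂
  · refine ⟨?_, rfl⟩
    simp [Matrix.one_apply] at e10
    omega
  · exfalso
    obtain ⟨q1, q2, q3, q4⟩ := hP₂
    simp [Matrix.one_apply] at e01
    omega
  · exfalso
    obtain ⟨q1, q2, q3, q4⟩ := hP₁
    simp [Matrix.one_apply] at e01
    omega
  · obtain ⟨p1, p2, p3, p4⟩ := hP₁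
    obtain ⟨q1, q2, q3, q4⟩ := hP₂
    have ha : a₁ = a₂ := by
      apply euclid (δ := N₁ 0 0) (p := N₁ 1 0) (q := N₂ 1 0) (by omega) (by omega) (by omega)
        (by omega) (by omega)
      rw [e00] at e10 ⊢
      omega
    subst ha
    refine ⟨rfl, mat_ext e00 e01 ?_ ?_⟩
    · rw [e00] at e10; omega
    · rw [e01] at e11; omega

theorem Nfact_false (r : List ℤ) (h : Pos r) :
    ((ρ (Tgo false r) : SL2) : Mat) = 1 ∨ Pf ((ρ (Tgo false r) : SL2) : Mat) := by
  cases r with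
  | nil => left; rw [rho_nil, Matrix.SpecialLinearGroup.coe_one]
  | cons c r₂ => right; exact (inv_lemma _ h (by simp)).2

theorem Nfact_true (r : List ℤ) (h : Pos r) :
    ((ρ (Tgo true r) : SL2) : Mat) = 1 ∨ Pt ((ρ (Tgo true r) : SL2) : Mat) := by
  cases r with
  | nil => left; rw [rho_nil, Matrix.SpecialLinearGroup.coe_one]
  | cons c r₂ => right; exact (inv_lemma _ h (by simp)).1

theorem inj_rho (l₁ : List ℤ) : ∀ (b : Bool) (l₂ : List ℤ), Pos l₁ → Pos l₂ →
    ρ (Tgo b l₁) = ρ (Tgo b l₂) → l₁ = l₂ := by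
  induction l₁ with
  | nil =>
    intro b l₂ _ hp2 h
    cases l₂ with
    | nil => rfl
    | cons c r₂ =>
      exfalso
      rw [rho_nil] at h
      have hco : (1 : Mat) = ((ρ (Tgo b (c :: r₂)) : SL2) : Mat) := by
        rw [← h, Matrix.SpecialLinearGroup.coe_one]
      cases b with
      | true =>
        obtain ⟨p1, p2, p3, p4⟩ := (inv_lemma _ hp2 (by simp)).1
        rw [← hco] at p3 p4
        simp [Matrix.one_apply] at p3 p4
      | false =>
        obtain ⟨p1, p2, p3, p4⟩ := (inv_lemma _ hp2 (by simp)).2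
        rw [← hco] at p1 p2
        simp [Matrix.one_apply] at p1 p2
  | cons a r₁ ih =>
    intro b l₂ hp1 hp2 h
    cases l₂ with
    | nil =>
      exfalso
      rw [rho_nil] at h
      have hco : ((ρ (Tgo b (a :: r₁)) : SL2) : Mat) = (1 : Mat) := by
        rw [h, Matrix.SpecialLinearGroup.coe_one]
      cases b with
      | true =>
        obtain ⟨p1, p2, p3, p4⟩ := (inv_lemma _ hp1 (by simp)).1
        rw [hco] at p3 p4
        simp [Matrix.one_apply] at p3 p4
      | false =>
        obtain ⟨p1, p2, p3, p4⟩ := (inv_lemma _ hp1 (by simp)).2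
        rw [hco] at p1 p2
        simp [Matrix.one_apply] at p1 p2
    | cons c r₂ =>
      have hpr₁ : Pos r₁ := fun x hx => hp1 x (by simp [hx])
      have hpr₂ : Pos r₂ := fun x hx => hp2 x (by simp [hx])
      cases b with
      | true =>
        have hco : Um a * ((ρ (Tgo false r₁) : SL2) : Mat)
            = Um c * ((ρ (Tgo false r₂) : SL2) : Mat) := by
          rw [← coe_rho_true, ← coe_rho_true, h]
        obtain ⟨hac, hN⟩ := stepUmat (Nfact_false r₁ hpr₁) (Nfact_false r₂ hpr₂) hco
        have : r₁ = r₂ := ih false r₂ hpr₁ hpr₂ (Subtype.coe_injective hN)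
        rw [hac, this]
      | false =>
        have hco : Lm a * ((ρ (Tgo true r₁) : SL2) : Mat)
            = Lm c * ((ρ (Tgo true r₂) : SL2) : Mat) := by
          rw [← coe_rho_false, ← coe_rho_false, h]
        obtain ⟨hac, hN⟩ := stepLmat (Nfact_true r₁ hpr₁) (Nfact_true r₂ hpr₂) hco
        have : r₁ = r₂ := ih true r₂ hpr₁ hpr₂ (Subtype.coe_injective hN)
        rw [hac, this]

theorem inj_nonneg {a₁ a₂ : ℤ} {r₁ r₂ : List ℤ} (h1 : Pos r₁) (h2 : Pos r₂)
    (h : ρ (T (a₁ :: r₁)) = ρ (T (a₂ :: r₂))) : a₁ = a₂ ∧ r₁ = r₂ := by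
  have hco : Um a₁ * ((ρ (Tgo false r₁) : SL2) : Mat)
      = Um a₂ * ((ρ (Tgo false r₂) : SL2) : Mat) := by
    rw [← coe_rho_true, ← coe_rho_true]
    exact congrArg Subtype.val h
  obtain ⟨hac, hN⟩ := stepUmat (Nfact_false r₁ h1) (Nfact_false r₂ h2) hco
  exact ⟨hac, inj_rho r₁ false r₂ h1 h2 (Subtype.coe_injective hN)⟩

def Dm : Mat := !![1, 0; 0, -1]

theorem Dm_Dm : Dm * Dm = 1 := by
  ext i j
  fin_cases i <;> fin_cases j <;>
    simp [Dm, Matrix.mul_apply, Fin.sum_univ_two, Matrix.one_apply]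

theorem Dm_cancel (X : Mat) : Dm * (Dm * X) = X := by
  rw [← Matrix.mul_assoc, Dm_Dm, Matrix.one_mul]

theorem Dm_Um (a : ℤ) : Um (-a) = Dm * Um a * Dm := by
  ext i j
  fin_cases i <;> fin_cases j <;>
    simp [Dm, Um, Matrix.mul_apply, Fin.sum_univ_two]

theorem Dm_Lm (a : ℤ) : Lm (-a) = Dm * Lm a * Dm := by
  ext i j
  fin_cases i <;> fin_cases j <;>
    simp [Dm, Lm, Matrix.mul_apply, Fin.sum_univ_two]

theorem coe_neg (l : List ℤ) : ∀ b : Bool,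
    ((ρ (Tgo b (l.map fun x => -x)) : SL2) : Mat) = Dm * ((ρ (Tgo b l) : SL2) : Mat) * Dm := by
  induction l with
  | nil =>
    intro b
    simp only [List.map_nil, rho_nil, Matrix.SpecialLinearGroup.coe_one, Matrix.mul_one, Dm_Dm]
  | cons a r ih =>
    intro b
    cases b with
    | true =>
      rw [List.map_cons, coe_rho_true, coe_rho_true, ih false, Dm_Um]
      simp only [Matrix.mul_assoc]
      rw [Dm_cancel]
    | false =>
      rw [List.map_cons, coe_rho_false, coe_rho_false, ih true, Dm_Lm]
      simp only [Matrix.mul_assoc]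
      rw [Dm_cancel]

def NNe (m : Mat) : Prop := ∀ i j, 0 ≤ m i j
def PN (m : Mat) : Prop := 0 ≤ m 0 0 ∧ m 0 1 ≤ 0 ∧ m 1 0 ≤ 0 ∧ 0 ≤ m 1 1

theorem NNe_mul {m₁ m₂ : Mat} (h1 : NNe m₁) (h2 : NNe m₂) : NNe (m₁ * m₂) := by
  intro i j
  rw [Matrix.mul_apply]
  exact Finset.sum_nonneg fun k _ => mul_nonneg (h1 i k) (h2 k j)

theorem NNe_one : NNe (1 : Mat) := by
  intro i j
  fin_cases i <;> fin_cases j <;> simp [Matrix.one_apply]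

theorem NNe_Um {a : ℤ} (h : 0 ≤ a) : NNe (Um a) := by
  intro i j
  fin_cases i <;> fin_cases j <;> simp [Um] <;> omega

theorem NNe_Lm {a : ℤ} (h : 0 ≤ a) : NNe (Lm a) := by
  intro i j
  fin_cases i <;> fin_cases j <;> simp [Lm] <;> omega

theorem NNe_pos (l : List ℤ) (h : Pos l) : ∀ b : Bool, NNe ((ρ (Tgo b l) : SL2) : Mat) := by
  induction l with
  | nil =>
    intro b
    rw [rho_nil, Matrix.SpecialLinearGroup.coe_one]
    exact NNe_one
  | cons a r ih =>
    intro b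
    have ha : 1 ≤ a := h a (by simp)
    have hr : Pos r := fun x hx => h x (by simp [hx])
    cases b with
    | true => rw [coe_rho_true]; exact NNe_mul (NNe_Um (by omega)) (ih hr false)
    | false => rw [coe_rho_false]; exact NNe_mul (NNe_Lm (by omega)) (ih hr true)

theorem std_shape {l : List ℤ} (h : Std l) (hn : ∀ x ∈ l, 0 ≤ x) :
    ∃ a r, l = a :: r ∧ 0 ≤ a ∧ Pos r := by
  obtain ⟨hne, _, htl⟩ := h
  cases l with
  | nil => exact absurd rfl hne
  | cons a r =>
    refine ⟨a, r, rfl, hn a (by simp), fun x hx => ?_⟩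
    have h1 := hn x (by simp [hx])
    have h2 := htl x (by simpa using hx)
    omega

theorem NNe_std {l : List ℤ} (h : Std l) (hn : ∀ x ∈ l, 0 ≤ x) :
    NNe ((ρ (T l) : SL2) : Mat) := by
  obtain ⟨a, r, rfl, ha, hr⟩ := std_shape h hn
  rw [show T (a :: r) = Tgo true (a :: r) from rfl, coe_rho_true]
  exact NNe_mul (NNe_Um ha) (NNe_pos r hr false)

theorem coe_T_neg (l : List ℤ) :
    ((ρ (T l) : SL2) : Mat) = Dm * ((ρ (T (l.map fun x => -x)) : SL2) : Mat) * Dm := by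
  rw [show T = Tgo true from rfl, coe_neg]
  simp only [Matrix.mul_assoc]
  rw [Dm_cancel, Dm_Dm, Matrix.mul_one]

theorem PN_std {l : List ℤ} (h : Std l) (hn : ∀ x ∈ l, x ≤ 0) :
    PN ((ρ (T l) : SL2) : Mat) := by
  have hstdn : Std (l.map fun x => -x) := std_neg h
  have hnn : ∀ x ∈ l.map (fun x : ℤ => -x), 0 ≤ x := by
    intro x hx
    simp only [List.mem_map] at hx
    obtain ⟨y, hy, rfl⟩ := hx
    have := hn y hy
    omega
  have hN := NNe_std hstdn hnn
  rw [coe_T_neg l]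
  set N := ((ρ (T (l.map fun x => -x)) : SL2) : Mat)
  have e : Dm * N * Dm = !![N 0 0, -(N 0 1); -(N 1 0), N 1 1] := by
    ext i j
    fin_cases i <;> fin_cases j <;>
      simp [Dm, Matrix.mul_apply, Fin.sum_univ_two, Matrix.vecMul, dotProduct]
  rw [e]
  exact ⟨by rw [ent00]; exact hN 0 0, by rw [ent01]; have := hN 0 1; omega,
    by rw [ent10]; have := hN 1 0; omega, by rw [ent11]; exact hN 1 1⟩

theorem coe_rho_E : ((ρ E : SL2) : Mat) = !![0, 1; -1, 0] := by
  rw [E_eq, map_mul, map_mul, ρ_s, ρ_t, Matrix.SpecialLinearGroup.coe_mul,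
    Matrix.SpecialLinearGroup.coe_mul]
  show Um 1 * Lm (-1) * Um 1 = _
  ext i j
  fin_cases i <;> fin_cases j <;>
    simp [Um, Lm, Matrix.mul_apply, Fin.sum_univ_two, Matrix.vecMul, dotProduct]

theorem rhoE4 : (ρ E) ^ (4 : ℕ) = 1 := by
  apply Subtype.ext
  show ((ρ E ^ (4 : ℕ) : SL2) : Mat) = ((1 : SL2) : Mat)
  rw [Matrix.SpecialLinearGroup.coe_pow, coe_rho_E, Matrix.SpecialLinearGroup.coe_one]
  ext i j
  rw [show (4 : ℕ) = 2 + 2 from rfl, pow_add, pow_two]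
  fin_cases i <;> fin_cases j <;>
    simp [Matrix.mul_apply, Fin.sum_univ_two, Matrix.vecMul, dotProduct,
      Matrix.one_apply]

theorem rhoE_period (k : ℤ) : (ρ E) ^ k = (ρ E) ^ (k % 4) := by
  conv_lhs => rw [show k = 4 * (k / 4) + k % 4 from (Int.mul_ediv_add_emod k 4).symm]
  rw [zpow_add, zpow_mul]
  rw [show ((ρ E) ^ (4 : ℤ)) = 1 by
    rw [show (4 : ℤ) = ((4 : ℕ) : ℤ) by norm_num, zpow_natCast]; exact rhoE4]
  simp

theorem coe_rho_E1 : ((ρ E ^ (1 : ℤ) : SL2) : Mat) = !![0, 1; -1, 0] := by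
  rw [zpow_one, coe_rho_E]

theorem coe_rho_E2 : ((ρ E ^ (2 : ℤ) : SL2) : Mat) = !![-1, 0; 0, -1] := by
  rw [show (2 : ℤ) = ((2 : ℕ) : ℤ) by norm_num, zpow_natCast,
    Matrix.SpecialLinearGroup.coe_pow, coe_rho_E, pow_two]
  ext i j
  fin_cases i <;> fin_cases j <;>
    simp [Matrix.mul_apply, Fin.sum_univ_two, Matrix.vecMul, dotProduct]

theorem coe_rho_E3 : ((ρ E ^ (3 : ℤ) : SL2) : Mat) = !![0, -1; 1, 0] := by
  rw [show (3 : ℤ) = ((3 : ℕ) : ℤ) by norm_num, zpow_natCast,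
    Matrix.SpecialLinearGroup.coe_pow, coe_rho_E,
    show (3 : ℕ) = 2 + 1 from rfl, pow_add, pow_two, pow_one]
  ext i j
  fin_cases i <;> fin_cases j <;>
    simp [Matrix.mul_apply, Fin.sum_univ_two, Matrix.vecMul, dotProduct]

noncomputable def eh : B3 →* Multiplicative ℤ :=
  PresentedGroup.toGroup (f := fun _ : Fin 2 => Multiplicative.ofAdd (1 : ℤ))
    (by
      intro r hr
      cases hr
      simp only [map_mul, map_inv, FreeGroup.lift_apply_of]
      group)

def asum : Bool → List ℤ → ℤ
  | _, [] => 0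
  | true, a :: l => a + asum false l
  | false, a :: l => -a + asum true l

theorem eh_s : eh s = Multiplicative.ofAdd (1 : ℤ) := PresentedGroup.toGroup.of _
theorem eh_t : eh t = Multiplicative.ofAdd (1 : ℤ) := PresentedGroup.toGroup.of _

theorem eh_Tgo (l : List ℤ) : ∀ b, eh (Tgo b l) = Multiplicative.ofAdd (asum b l) := by
  induction l with
  | nil => intro b; cases b <;> exact map_one eh
  | cons a r ih =>
    intro b
    cases b with
    | true =>
      show eh (s ^ a * Tgo false r) = _
      rw [map_mul, map_zpow, eh_s, ih false]
      show Multiplicative.ofAdd 1 ^ a * Multiplicative.ofAdd (asum false r)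
          = Multiplicative.ofAdd (a + asum false r)
      rw [← ofAdd_zsmul, ← ofAdd_add]
      norm_num
    | false =>
      show eh (t ^ (-a) * Tgo true r) = _
      rw [map_mul, map_zpow, eh_t, ih true]
      show Multiplicative.ofAdd 1 ^ (-a) * Multiplicative.ofAdd (asum true r)
          = Multiplicative.ofAdd (-a + asum true r)
      rw [← ofAdd_zsmul, ← ofAdd_add]
      norm_num

theorem eh_E : eh E = Multiplicative.ofAdd (3 : ℤ) := by
  rw [E_eq, map_mul, map_mul, eh_s, eh_t, ← ofAdd_add, ← ofAdd_add]
  norm_num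
def Sgn (a00 a01 a10 a11 : ℤ) : Prop :=
  (0 ≤ a00 ∧ 0 ≤ a01 ∧ 0 ≤ a10 ∧ 0 ≤ a11) ∨ (0 ≤ a00 ∧ a01 ≤ 0 ∧ a10 ≤ 0 ∧ 0 ≤ a11)

theorem rot1 {a00 a01 a10 a11 b00 b01 b10 b11 : ℤ}
    (hA : Sgn a00 a01 a10 a11) (hB : Sgn b00 b01 b10 b11)
    (hdA : a00 * a11 - a01 * a10 = 1) (hdB : b00 * b11 - b01 * b10 = 1)
    (h1 : a00 = -b01) (h2 : a01 = b00) (h3 : a10 = -b11) (h4 : a11 = b10) : False := by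
  rcases hA with ⟨p1, p2, p3, p4⟩ | ⟨p1, p2, p3, p4⟩ <;>
    rcases hB with ⟨q1, q2, q3, q4⟩ | ⟨q1, q2, q3, q4⟩ <;>
    nlinarith [hdA, hdB]

theorem rot2 {a00 a01 a10 a11 b00 b01 b10 b11 : ℤ}
    (hA : Sgn a00 a01 a10 a11) (hB : Sgn b00 b01 b10 b11)
    (hdA : a00 * a11 - a01 * a10 = 1) (hdB : b00 * b11 - b01 * b10 = 1)
    (h1 : a00 = -b00) (h2 : a01 = -b01) (h3 : a10 = -b10) (h4 : a11 = -b11) : False := by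
  rcases hA with ⟨p1, p2, p3, p4⟩ | ⟨p1, p2, p3, p4⟩ <;>
    rcases hB with ⟨q1, q2, q3, q4⟩ | ⟨q1, q2, q3, q4⟩ <;>
    nlinarith [hdA, hdB]

theorem rot3 {a00 a01 a10 a11 b00 b01 b10 b11 : ℤ}
    (hA : Sgn a00 a01 a10 a11) (hB : Sgn b00 b01 b10 b11)
    (hdA : a00 * a11 - a01 * a10 = 1) (hdB : b00 * b11 - b01 * b10 = 1)
    (h1 : a00 = b01) (h2 : a01 = -b00) (h3 : a10 = b11) (h4 : a11 = -b10) : False := by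
  rcases hA with ⟨p1, p2, p3, p4⟩ | ⟨p1, p2, p3, p4⟩ <;>
    rcases hB with ⟨q1, q2, q3, q4⟩ | ⟨q1, q2, q3, q4⟩ <;>
    nlinarith [hdA, hdB]

theorem sl2_one {g : SL2} (h : (g : Mat) = 1) : g = 1 := by
  apply Subtype.coe_injective
  show (g : Mat) = ((1 : SL2) : Mat)
  rw [h, Matrix.SpecialLinearGroup.coe_one]

theorem coe_neg_T (l : List ℤ) :
    ((ρ (T (l.map fun x => -x)) : SL2) : Mat) = Dm * ((ρ (T l) : SL2) : Mat) * Dm :=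
  coe_neg l true

theorem eh_T (l : List ℤ) : eh (T l) = Multiplicative.ofAdd (asum true l) := eh_Tgo l true

theorem std_rho_one {l : List ℤ} (h : Std l) (hn : ∀ x ∈ l, 0 ≤ x) (hone : ρ (T l) = 1) :
    l = [0] := by
  obtain ⟨a, r, rfl, ha, hr⟩ := std_shape h hn
  have h0 : ρ (T ((0 : ℤ) :: ([] : List ℤ))) = 1 := by
    show ρ (Tgo true [0]) = 1
    rw [Tgo_zero]
    exact map_one ρ
  obtain ⟨hac, hrr⟩ := inj_nonneg hr (by intro x hx; simp at hx) (hone.trans h0.symm)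
  rw [hac, hrr]

theorem mixed_one {A : Mat} (hNN : NNe A) (hPN : PN A) (hdet : A.det = 1) : A = 1 := by
  obtain ⟨q1, q2, q3, q4⟩ := hPN
  have h01 : A 0 1 = 0 := le_antisymm q2 (hNN 0 1)
  have h10 : A 1 0 = 0 := le_antisymm q3 (hNN 1 0)
  rw [Matrix.det_fin_two, h01, h10] at hdet
  simp at hdet
  rcases Int.mul_eq_one_iff_eq_one_or_neg_one.1 hdet with ⟨e1, e2⟩ | ⟨e1, e2⟩
  · refine mat_ext ?_ ?_ ?_ ?_ <;> simp [Matrix.one_apply, e1, e2, h01, h10]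
  · exfalso; omega

theorem rho_T_inj {l₁ l₂ : List ℤ} (h₁ : Std l₁) (h₂ : Std l₂)
    (h : ρ (T l₁) = ρ (T l₂)) : l₁ = l₂ := by
  have hco : ((ρ (T l₁) : SL2) : Mat) = ((ρ (T l₂) : SL2) : Mat) := congrArg Subtype.val h
  rcases sign_dichotomy h₁.2.1 with hs₁ | hs₁ <;> rcases sign_dichotomy h₂.2.1 with hs₂ | hs₂
  · obtain ⟨a₁, r₁, rfl, ha₁, hr₁⟩ := std_shape h₁ hs₁
    obtain ⟨a₂, r₂, rfl, ha₂, hr₂⟩ := std_shape h₂ hs₂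
    obtain ⟨hac, hrr⟩ := inj_nonneg hr₁ hr₂ h
    rw [hac, hrr]
  · -- l₁ nonneg, l₂ nonpos
    have hNN := NNe_std h₁ hs₁
    have hPN := PN_std h₂ hs₂
    rw [← hco] at hPN
    have hA1 : ((ρ (T l₁) : SL2) : Mat) = 1 := mixed_one hNN hPN (ρ (T l₁)).prop
    have hl₁ : l₁ = [0] := std_rho_one h₁ hs₁ (sl2_one hA1)
    have hl₂ : l₂ = [0] := by
      have hnegstd := std_neg h₂
      have hnegnn : ∀ x ∈ l₂.map (fun x : ℤ => -x), 0 ≤ x := by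
        intro x hx
        simp only [List.mem_map] at hx
        obtain ⟨y, hy, rfl⟩ := hx
        have := hs₂ y hy
        omega
      have hconj : ((ρ (T (l₂.map fun x => -x)) : SL2) : Mat) = 1 := by
        rw [coe_neg_T, ← hco, hA1, Matrix.mul_one, Dm_Dm]
      have := std_rho_one hnegstd hnegnn (sl2_one hconj)
      have h2 := congrArg (List.map (fun x : ℤ => -x)) this
      simpa [List.map_map, Function.comp] using h2
    rw [hl₁, hl₂]
  · -- l₁ nonpos, l₂ nonneg: symmetric
    have hNN := NNe_std h₂ hs₂
    have hPN := PN_std h₁ hs₁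
    rw [hco] at hPN
    have hA1 : ((ρ (T l₂) : SL2) : Mat) = 1 := mixed_one hNN hPN (ρ (T l₂)).prop
    have hl₂ : l₂ = [0] := std_rho_one h₂ hs₂ (sl2_one hA1)
    have hl₁ : l₁ = [0] := by
      have hnegstd := std_neg h₁
      have hnegnn : ∀ x ∈ l₁.map (fun x : ℤ => -x), 0 ≤ x := by
        intro x hx
        simp only [List.mem_map] at hx
        obtain ⟨y, hy, rfl⟩ := hx
        have := hs₁ y hy
        omega
      have hconj : ((ρ (T (l₁.map fun x => -x)) : SL2) : Mat) = 1 := by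
        rw [coe_neg_T, hco, hA1, Matrix.mul_one, Dm_Dm]
      have := std_rho_one hnegstd hnegnn (sl2_one hconj)
      have h2 := congrArg (List.map (fun x : ℤ => -x)) this
      simpa [List.map_map, Function.comp] using h2
    rw [hl₁, hl₂]
  · -- both nonpos
    have hco' : ((ρ (T (l₁.map fun x => -x)) : SL2) : Mat)
        = ((ρ (T (l₂.map fun x => -x)) : SL2) : Mat) := by
      rw [coe_neg_T, coe_neg_T, hco]
    have hnegnn : ∀ (l : List ℤ), (∀ x ∈ l, x ≤ 0) → ∀ x ∈ l.map (fun x : ℤ => -x), 0 ≤ x := by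
      intro l hl x hx
      simp only [List.mem_map] at hx
      obtain ⟨y, hy, rfl⟩ := hx
      have := hl y hy
      omega
    obtain ⟨a₁, r₁, he₁, ha₁, hr₁⟩ := std_shape (std_neg h₁) (hnegnn l₁ hs₁)
    obtain ⟨a₂, r₂, he₂, ha₂, hr₂⟩ := std_shape (std_neg h₂) (hnegnn l₂ hs₂)
    rw [he₁, he₂] at hco'
    obtain ⟨hac, hrr⟩ := inj_nonneg hr₁ hr₂ (Subtype.coe_injective hco')
    have hmapeq : l₁.map (fun x : ℤ => -x) = l₂.map (fun x : ℤ => -x) := by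
      rw [he₁, he₂, hac, hrr]
    have h2 := congrArg (List.map (fun x : ℤ => -x)) hmapeq
    simpa [List.map_map, Function.comp] using h2

theorem std_unique {l₁ l₂ : List ℤ} {k₁ k₂ : ℤ} (h₁ : Std l₁) (h₂ : Std l₂)
    (h : T l₁ * E ^ k₁ = T l₂ * E ^ k₂) : l₁ = l₂ ∧ k₁ = k₂ := by
  have he := congrArg eh h
  simp only [map_mul, map_zpow, eh_E, eh_T] at he
  have hsum : asum true l₁ + 3 * k₁ = asum true l₂ + 3 * k₂ := by
    have h2 := congrArg Multiplicative.toAdd he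
    simp only [toAdd_mul, toAdd_zpow, toAdd_ofAdd, smul_eq_mul] at h2
    omega
  suffices hl : l₁ = l₂ by
    refine ⟨hl, ?_⟩
    rw [hl] at hsum
    omega
  have hρ := congrArg ρ h
  simp only [map_mul, map_zpow] at hρ
  have hd : ρ (T l₁) = ρ (T l₂) * (ρ E) ^ ((k₂ - k₁) % 4) := by
    rw [← rhoE_period]
    have hstep : ρ (T l₁) = ρ (T l₂) * (ρ E) ^ k₂ * ((ρ E) ^ k₁)⁻¹ := by
      rw [← hρ]; group
    rw [hstep, zpow_sub]
    group
  have hq0 : 0 ≤ (k₂ - k₁) % 4 := Int.emod_nonneg _ (by norm_num)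
  have hq4 : (k₂ - k₁) % 4 < 4 := Int.emod_lt_of_pos _ (by norm_num)
  have hA : Sgn (((ρ (T l₁) : SL2) : Mat) 0 0) (((ρ (T l₁) : SL2) : Mat) 0 1)
      (((ρ (T l₁) : SL2) : Mat) 1 0) (((ρ (T l₁) : SL2) : Mat) 1 1) := by
    rcases sign_dichotomy h₁.2.1 with hs | hs
    · left; have := NNe_std h₁ hs; exact ⟨this 0 0, this 0 1, this 1 0, this 1 1⟩
    · right; exact PN_std h₁ hs
  have hB : Sgn (((ρ (T l₂) : SL2) : Mat) 0 0) (((ρ (T l₂) : SL2) : Mat) 0 1)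
      (((ρ (T l₂) : SL2) : Mat) 1 0) (((ρ (T l₂) : SL2) : Mat) 1 1) := by
    rcases sign_dichotomy h₂.2.1 with hs | hs
    · left; have := NNe_std h₂ hs; exact ⟨this 0 0, this 0 1, this 1 0, this 1 1⟩
    · right; exact PN_std h₂ hs
  have hdA : ((ρ (T l₁) : SL2) : Mat) 0 0 * ((ρ (T l₁) : SL2) : Mat) 1 1
      - ((ρ (T l₁) : SL2) : Mat) 0 1 * ((ρ (T l₁) : SL2) : Mat) 1 0 = 1 := by
    have := (ρ (T l₁)).prop
    rwa [Matrix.det_fin_two] at this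
  have hdB : ((ρ (T l₂) : SL2) : Mat) 0 0 * ((ρ (T l₂) : SL2) : Mat) 1 1
      - ((ρ (T l₂) : SL2) : Mat) 0 1 * ((ρ (T l₂) : SL2) : Mat) 1 0 = 1 := by
    have := (ρ (T l₂)).prop
    rwa [Matrix.det_fin_two] at this
  have hq : (k₂ - k₁) % 4 = 0 ∨ (k₂ - k₁) % 4 = 1 ∨ (k₂ - k₁) % 4 = 2 ∨ (k₂ - k₁) % 4 = 3 := by
    omega
  set A : Mat := ((ρ (T l₁) : SL2) : Mat) with hAdef
  set B : Mat := ((ρ (T l₂) : SL2) : Mat) with hBdef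
  rcases hq with hq | hq | hq | hq
  · rw [hq, zpow_zero, mul_one] at hd
    exact rho_T_inj h₁ h₂ hd
  · exfalso
    rw [hq] at hd
    have hcoe : A = B * !![0, 1; -1, 0] := by
      rw [hAdef, hBdef, hd, Matrix.SpecialLinearGroup.coe_mul, coe_rho_E1]
    have hBJ : B * !![0, 1; -1, 0] = !![-(B 0 1), B 0 0; -(B 1 1), B 1 0] := by
      ext i j
      fin_cases i <;> fin_cases j <;>
        simp [Matrix.mul_apply, Fin.sum_univ_two, Matrix.vecMul, dotProduct]
    rw [hBJ] at hcoe
    exact rot1 hA hB hdA hdB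
      (by have := congrFun (congrFun hcoe 0) 0; rwa [ent00] at this)
      (by have := congrFun (congrFun hcoe 0) 1; rwa [ent01] at this)
      (by have := congrFun (congrFun hcoe 1) 0; rwa [ent10] at this)
      (by have := congrFun (congrFun hcoe 1) 1; rwa [ent11] at this)
  · exfalso
    rw [hq] at hd
    have hcoe : A = B * !![-1, 0; 0, -1] := by
      rw [hAdef, hBdef, hd, Matrix.SpecialLinearGroup.coe_mul, coe_rho_E2]
    have hBJ : B * !![-1, 0; 0, -1] = !![-(B 0 0), -(B 0 1); -(B 1 0), -(B 1 1)] := by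
      ext i j
      fin_cases i <;> fin_cases j <;>
        simp [Matrix.mul_apply, Fin.sum_univ_two, Matrix.vecMul, dotProduct]
    rw [hBJ] at hcoe
    exact rot2 hA hB hdA hdB
      (by have := congrFun (congrFun hcoe 0) 0; rwa [ent00] at this)
      (by have := congrFun (congrFun hcoe 0) 1; rwa [ent01] at this)
      (by have := congrFun (congrFun hcoe 1) 0; rwa [ent10] at this)
      (by have := congrFun (congrFun hcoe 1) 1; rwa [ent11] at this)
  · exfalso
    rw [hq] at hd
    have hcoe : A = B * !![0, -1; 1, 0] := by
      rw [hAdef, hBdef, hd, Matrix.SpecialLinearGroup.coe_mul, coe_rho_E3]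
    have hBJ : B * !![0, -1; 1, 0] = !![B 0 1, -(B 0 0); B 1 1, -(B 1 0)] := by
      ext i j
      fin_cases i <;> fin_cases j <;>
        simp [Matrix.mul_apply, Fin.sum_univ_two, Matrix.vecMul, dotProduct]
    rw [hBJ] at hcoe
    exact rot3 hA hB hdA hdB
      (by have := congrFun (congrFun hcoe 0) 0; rwa [ent00] at this)
      (by have := congrFun (congrFun hcoe 0) 1; rwa [ent01] at this)
      (by have := congrFun (congrFun hcoe 1) 0; rwa [ent10] at this)
      (by have := congrFun (congrFun hcoe 1) 1; rwa [ent11] at this)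


/-- Lemma 3.1 (Cabrera-Ibarra): every 3-braid `B` has a unique standard form
`B = 𝒯(a₁,…,aₙ)·Eᵏ` where `n ≥ 1` (the sequence is nonempty), all entries have the
same sign (`aᵢ·aⱼ ≥ 0` for all `i, j`), and `aᵢ ≠ 0` for all `i > 1`. -/
theorem standard_form_exists_unique (B : B3) :
    ∃! p : List ℤ × ℤ,
      p.1 ≠ [] ∧
      (∀ a ∈ p.1, ∀ b ∈ p.1, 0 ≤ a * b) ∧
      (∀ a ∈ p.1.tail, a ≠ 0) ∧
      B = T p.1 * E ^ p.2 := by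
  
  obtain ⟨l, k, hstd, hB⟩ := exists_std B
  refine ⟨(l, k), ⟨hstd.1, hstd.2.1, hstd.2.2, hB⟩, ?_⟩
  rintro ⟨l', k'⟩ ⟨h1, h2, h3, h4⟩
  have heq : T l' * E ^ k' = T l * E ^ k := by rw [← h4, ← hB]
  have := std_unique ⟨h1, h2, h3⟩ hstd heq
  exact Prod.ext this.1 this.2
end

section
/- Let n ≥ 2 and let a₁, …, aₙ be integers which are either all ≥ 1 or all ≤ −1. Define rational numbers v₁ = a₁ and v_k = a_k + 1/v_{k−1} for 2 ≤ k ≤ n. Then every v_k is well defined and nonzero (indeed |v_k| ≥ 1 for all k), and when vₙ is written as a fraction p/q in lowest terms, the numerator satisfies |p| ≥ 2. -/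
/-- Let `n ≥ 2` and let `a₀, …, a_{n−1}` be integers which are either all `≥ 1` or all
`≤ −1`. Define rationals `v₀ = a₀` and `v_k = a_k + 1/v_{k−1}` for `1 ≤ k ≤ n−1`.
Then every `v_k` (for `k < n`) is well defined and nonzero — indeed `|v_k| ≥ 1` — and
when `v_{n−1}` is written as a fraction `p/q` in lowest terms, the numerator satisfies
`|p| ≥ 2`. (This is the arithmetic content of Theorem 3.7: a continued fraction with at
least two entries, all of the same sign, never has numerator `±1`.) -/
theorem continued_fraction_numerator_ge_two (n : ℕ) (hn : 2 ≤ n) (a : ℕ → ℤ)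
    (ha : (∀ i < n, 1 ≤ a i) ∨ (∀ i < n, a i ≤ -1))
    (v : ℕ → ℚ) (hv0 : v 0 = a 0)
    (hvk : ∀ k, k + 1 < n → v (k + 1) = a (k + 1) + (v k)⁻¹) :
    (∀ k < n, 1 ≤ |v k|) ∧ 2 ≤ |(v (n - 1)).num| := by
  rcases ha with hpos | hneg
  · have key : ∀ k < n, 1 ≤ v k ∧ (1 ≤ k → 1 < v k) := by
      intro k
      induction k with
      | zero =>
        intro _
        rw [hv0]
        have : (1:ℚ) ≤ a 0 := by exact_mod_cast hpos 0 (by omega)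
        exact ⟨this, by omega⟩
      | succ k ih =>
        intro hk
        obtain ⟨h1, _⟩ := ih (by omega)
        have hvpos : 0 < v k := by linarith
        have hinv : 0 < (v k)⁻¹ := by positivity
        have hinv1 : (v k)⁻¹ ≤ 1 := by
          rw [inv_le_one_iff₀]; right; exact h1
        rw [hvk k hk]
        have hak : (1:ℚ) ≤ a (k+1) := by exact_mod_cast hpos (k+1) hk
        exact ⟨by linarith, fun _ => by linarith⟩
    have hlast : 1 < v (n - 1) := by
      obtain ⟨_, h⟩ := key (n-1) (by omega)
      exact h (by omega)
    have hnum : 2 ≤ (v (n-1)).num := by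
      set w := v (n-1) with hw
      have hden : (0:ℚ) < (w.den : ℚ) := by positivity
      have : (w.den : ℚ) < (w.num : ℚ) := by
        have := Rat.num_div_den w
        rw [← this] at hlast
        rwa [lt_div_iff₀ hden, one_mul] at hlast
      have h2 : (w.den : ℤ) < w.num := by exact_mod_cast this
      have : 1 ≤ (w.den : ℤ) := by exact_mod_cast w.pos
      omega
    constructor
    · intro k hk
      have := (key k hk).1
      rw [abs_of_pos (by linarith)]; exact this
    · rw [abs_of_pos (by omega)]; exact hnum
  · have key : ∀ k < n, v k ≤ -1 ∧ (1 ≤ k → v k < -1) := by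
      intro k
      induction k with
      | zero =>
        intro _
        rw [hv0]
        have : (a 0 : ℚ) ≤ -1 := by exact_mod_cast hneg 0 (by omega)
        exact ⟨this, by omega⟩
      | succ k ih =>
        intro hk
        obtain ⟨h1, _⟩ := ih (by omega)
        have hvneg : v k < 0 := by linarith
        have hinv : (v k)⁻¹ < 0 := by
          simpa using inv_lt_zero.mpr hvneg
        rw [hvk k hk]
        have hak : (a (k+1) : ℚ) ≤ -1 := by exact_mod_cast hneg (k+1) hk
        exact ⟨by linarith, fun _ => by linarith⟩
    have hlast : v (n - 1) < -1 := by
      obtain ⟨_, h⟩ := key (n-1) (by omega)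
      exact h (by omega)
    have hnum : (v (n-1)).num ≤ -2 := by
      set w := v (n-1) with hw
      have hden : (0:ℚ) < (w.den : ℚ) := by positivity
      have : (w.num : ℚ) < -(w.den : ℚ) := by
        have := Rat.num_div_den w
        rw [← this] at hlast
        rw [div_lt_iff₀ hden] at hlast
        linarith
      have h2 : w.num < -(w.den : ℤ) := by exact_mod_cast this
      have : 1 ≤ (w.den : ℤ) := by exact_mod_cast w.pos
      omega
    constructor
    · intro k hk
      have := (key k hk).1
      rw [abs_of_neg (by linarith)]; linarith
    · rw [abs_of_neg (by omega)]; omega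
end
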